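/- Using Stirling's approximation log Γ(z) = -z + (z - 1/2) log z + O(1), the negative log Bayes measure for a variable over α values with Dirichlet(1/2,...,1/2) prior satisfies -log Q^n = Σ_{x=0}^{α-1} c(x) log(n/c(x)) + ((α-1)/2) log n + O(1), uniformly over counts c(x) with Σ_x c(x) = n. -/

import Mathlib

open Real Finset

lemma stirling_fact_bound : ∃ K : ℝ, ∀ n : ℕ, 1 ≤ n →
    |Real.log (n.factorial) - ((n : ℝ) * Real.log n - n + (1/2) * Real.log n)| ≤ K := by
  obtain ⟨c, hc⟩ : ∃ c : ℝ, ∀ n : ℕ, c ≤ Real.log (Stirling.stirlingSeq (n + 1)) :=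
    ⟨_, Stirling.log_stirlingSeq_bounded_by_constant⟩
  refine ⟨|Real.log (Stirling.stirlingSeq 1)| + |c| + (1/2) * Real.log 2, ?_⟩
  intro n hn
  obtain ⟨m, rfl⟩ := Nat.exists_eq_add_of_le hn
  set n := 1 + m with hn'
  have h0 : (0:ℝ) < n := by positivity
  have hf := Stirling.log_stirlingSeq_formula n
  have hlog : Real.log (n.factorial) - ((n : ℝ) * Real.log n - n + (1/2) * Real.log n)
      = Real.log (Stirling.stirlingSeq n) + (1/2) * Real.log 2 := by
    rw [hf]
    rw [Real.log_mul (by norm_num) (by positivity), Real.log_div (by positivity) (by positivity),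
      Real.log_exp]
    ring
  rw [hlog]
  have hub : Real.log (Stirling.stirlingSeq n) ≤ Real.log (Stirling.stirlingSeq 1) := by
    have := Stirling.log_stirlingSeq'_antitone (Nat.zero_le m)
    simpa [hn', Nat.add_comm] using this
  have hlb : c ≤ Real.log (Stirling.stirlingSeq n) := by
    have := hc m
    simpa [hn', Nat.add_comm] using this
  have h2 : |Real.log (Stirling.stirlingSeq n)| ≤ |Real.log (Stirling.stirlingSeq 1)| + |c| := by
    rw [abs_le]
    constructor
    · linarith [neg_abs_le c, abs_nonneg (Real.log (Stirling.stirlingSeq 1))]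
    · linarith [le_abs_self (Real.log (Stirling.stirlingSeq 1)), abs_nonneg c]
  calc |Real.log (Stirling.stirlingSeq n) + (1/2) * Real.log 2|
      ≤ |Real.log (Stirling.stirlingSeq n)| + |(1/2) * Real.log 2| := abs_add_le _ _
    _ ≤ |Real.log (Stirling.stirlingSeq 1)| + |c| + (1/2) * Real.log 2 := by
        have : |(1/2) * Real.log 2| = (1/2) * Real.log 2 := by
          rw [abs_of_nonneg]; positivity
        linarith

lemma gamma_nat_add_half (m : ℕ) :
    Real.Gamma (m + 1/2) = ((2*m).factorial : ℝ) / (4^m * m.factorial) * Real.sqrt π := by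
  induction m with
  | zero => norm_num [Real.Gamma_one_half_eq]
  | succ k ih =>
    have h1 : ((k:ℝ) + 1) + 1/2 = ((k:ℝ) + 1/2) + 1 := by ring
    have h2 : ((k:ℝ) + 1/2) ≠ 0 := by positivity
    rw [Nat.cast_succ, h1, Real.Gamma_add_one h2, ih]
    have hfk : (k.factorial : ℝ) ≠ 0 := Nat.cast_ne_zero.mpr k.factorial_ne_zero
    have hf2k : ((2*k).factorial : ℝ) ≠ 0 := Nat.cast_ne_zero.mpr (2*k).factorial_ne_zero
    have e1 : (2*(k+1)).factorial = (2*k+2) * ((2*k+1) * (2*k).factorial) := by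
      have : 2*(k+1) = (2*k+1) + 1 := by ring
      rw [this, Nat.factorial_succ, Nat.factorial_succ]
    have e2 : (k+1).factorial = (k+1) * k.factorial := Nat.factorial_succ k
    rw [e1, e2]
    push_cast
    field_simp
    ring



lemma half_stirling_bound : ∃ K : ℝ, ∀ m : ℕ,
    |Real.log (Real.Gamma (m + 1/2)) - ((m : ℝ) * Real.log m - m)| ≤ K := by
  obtain ⟨K₁, hK₁⟩ := stirling_fact_bound
  have hK₁0 : 0 ≤ K₁ := le_trans (abs_nonneg _) (hK₁ 1 le_rfl)
  have hl2 : 0 ≤ Real.log 2 := Real.log_nonneg (by norm_num)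
  refine ⟨2*K₁ + (1/2)*Real.log 2 + |Real.log (Real.sqrt π)|, ?_⟩
  intro m
  rcases Nat.eq_zero_or_pos m with rfl | hm
  · simp only [Nat.cast_zero, zero_add, Real.log_zero, mul_zero, sub_zero, zero_mul,
      sub_zero]
    rw [Real.Gamma_one_half_eq]
    nlinarith [le_abs_self (Real.log (Real.sqrt π)), abs_nonneg (Real.log (Real.sqrt π)),
      neg_abs_le (Real.log (Real.sqrt π))]
  · have hm1 : (1:ℕ) ≤ m := hm
    have hmR : (0:ℝ) < m := by exact_mod_cast hm
    have he1 := hK₁ (2*m) (by omega)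
    have he2 := hK₁ m hm1
    set e1 := Real.log ((2*m).factorial) - (((2*m:ℕ) : ℝ) * Real.log (2*m:ℕ) - (2*m:ℕ) + (1/2) * Real.log (2*m:ℕ)) with he1d
    set e2 := Real.log (m.factorial) - ((m : ℝ) * Real.log m - m + (1/2) * Real.log m) with he2d
    have hne1 : ((2*m).factorial : ℝ) ≠ 0 := Nat.cast_ne_zero.mpr (2*m).factorial_ne_zero
    have hne2 : (m.factorial : ℝ) ≠ 0 := Nat.cast_ne_zero.mpr m.factorial_ne_zero
    have hne3 : (4:ℝ)^m ≠ 0 := by positivity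
    have hcast : ((2*m:ℕ) : ℝ) = 2 * (m:ℝ) := by push_cast; ring
    have hlog2m : Real.log ((2*m:ℕ):ℝ) = Real.log 2 + Real.log m := by
      rw [hcast, Real.log_mul (by norm_num) (ne_of_gt hmR)]
    have hlog4 : Real.log ((4:ℝ)^m) = m * (2 * Real.log 2) := by
      rw [show (4:ℝ) = 2^2 by norm_num, ← pow_mul, Real.log_pow]
      push_cast; ring
    have key : Real.log (Real.Gamma (m + 1/2)) - ((m : ℝ) * Real.log m - m)
        = e1 - e2 + (1/2)*Real.log 2 + Real.log (Real.sqrt π) := by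
      rw [gamma_nat_add_half m, Real.log_mul (by positivity) (by positivity),
        Real.log_div hne1 (by positivity), Real.log_mul hne3 hne2, hlog4, he1d, he2d,
        hlog2m, hcast]
      ring
    rw [key]
    clear_value e1 e2
    rw [abs_le] at he1 he2 ⊢
    constructor
    · linarith [neg_abs_le (Real.log (Real.sqrt π)), he1.1, he1.2, he2.1, he2.2, le_abs_self (Real.log (Real.sqrt π))]
    · linarith [neg_abs_le (Real.log (Real.sqrt π)), he1.1, he1.2, he2.1, he2.2, le_abs_self (Real.log (Real.sqrt π))]



lemma shift_bound (b s : ℝ) (hb : 0 ≤ b) (hs : 0 ≤ s) (n : ℕ) (hn : 1 ≤ n) :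
    |((n:ℝ) + b + s) * (Real.log ((n:ℝ) + b) - Real.log n) - b| ≤ b + (b + s) * b := by
  have hn1 : (1:ℝ) ≤ n := by exact_mod_cast hn
  have hnpos : (0:ℝ) < n := by linarith
  have hx : (0:ℝ) < ((n:ℝ) + b) / n := by positivity
  have hL : Real.log ((n:ℝ) + b) - Real.log n = Real.log (((n:ℝ) + b) / n) :=
    (Real.log_div (by positivity) (ne_of_gt hnpos)).symm
  have h1 : (1:ℝ) ≤ ((n:ℝ) + b) / n := by
    rw [le_div_iff₀ hnpos]; linarith
  have hL0 : 0 ≤ Real.log (((n:ℝ) + b) / n) := Real.log_nonneg h1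
  have hLup : Real.log (((n:ℝ) + b) / n) ≤ b / n := by
    have := Real.log_le_sub_one_of_pos hx
    have he : ((n:ℝ) + b) / n - 1 = b / n := by field_simp; ring
    linarith [he ▸ this]
  rw [hL, abs_le]
  have hbn : b / n ≤ b := by
    rw [div_le_iff₀ hnpos]; nlinarith
  constructor
  · nlinarith
  · have hkey : ((n:ℝ) + b + s) * Real.log (((n:ℝ) + b) / n) ≤ ((n:ℝ) + b + s) * (b / n) := by
      apply mul_le_mul_of_nonneg_left hLup (by linarith)
    have : ((n:ℝ) + b + s) * (b / n) = b + (b + s) * (b / n) := by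
      field_simp; ring
    nlinarith


lemma gamma_shift_bound (α : ℕ) (hα : 2 ≤ α) : ∃ K : ℝ, ∀ n : ℕ, 1 ≤ n →
    |Real.log (Real.Gamma ((n:ℝ) + (α:ℝ)/2)) - (((n:ℝ) + ((α:ℝ)-1)/2) * Real.log n - n)| ≤ K := by
  obtain ⟨K₁, hK₁⟩ := stirling_fact_bound
  obtain ⟨K₂, hK₂⟩ := half_stirling_bound
  rcases Nat.even_or_odd α with ⟨a, ha⟩ | ⟨a, ha⟩
  · -- α = a + a
    have ha1 : 1 ≤ a := by omega
    set b : ℝ := (a:ℝ) - 1 with hbdef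
    have hb : 0 ≤ b := by
      have : (1:ℝ) ≤ (a:ℝ) := by exact_mod_cast ha1
      simp [hbdef]; linarith
    refine ⟨K₁ + (b + (b + 1/2) * b), ?_⟩
    intro n hn
    set m := n + a - 1 with hmdef
    have hm1 : 1 ≤ m := by omega
    have hmc : (m:ℝ) = (n:ℝ) + b := by
      have h : m + 1 = n + a := by omega
      have : (m:ℝ) + 1 = (n:ℝ) + (a:ℝ) := by exact_mod_cast h
      simp [hbdef]; linarith
    have harg : (n:ℝ) + (α:ℝ)/2 = (m:ℝ) + 1 := by
      rw [hmc]; subst ha; push_cast; simp [hbdef]; ring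
    rw [harg, Real.Gamma_nat_eq_factorial]
    have he := hK₁ m hm1
    have hshift := shift_bound b (1/2) hb (by norm_num) n hn
    have hα2 : ((α:ℝ) - 1)/2 = b + 1/2 := by
      subst ha; push_cast; simp [hbdef]; ring
    have key : Real.log m.factorial - (((n:ℝ) + ((α:ℝ)-1)/2) * Real.log n - n)
        = (Real.log m.factorial - ((m:ℝ) * Real.log m - m + (1/2) * Real.log m))
          + (((n:ℝ) + b + 1/2) * (Real.log ((n:ℝ) + b) - Real.log n) - b) := by
      rw [hα2, hmc]; ring
    rw [key]
    exact (abs_add_le _ _).trans (add_le_add he hshift)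
  · -- α = 2*a + 1
    have ha1 : 1 ≤ a := by omega
    have hb : (0:ℝ) ≤ (a:ℝ) := by positivity
    refine ⟨K₂ + ((a:ℝ) + ((a:ℝ) + 0) * a), ?_⟩
    intro n hn
    set m := n + a with hmdef
    have hmc : (m:ℝ) = (n:ℝ) + (a:ℝ) := by push_cast [hmdef]; ring
    have harg : (n:ℝ) + (α:ℝ)/2 = (m:ℝ) + 1/2 := by
      rw [hmc]; subst ha; push_cast; ring
    rw [harg]
    have he := hK₂ m
    have hshift := shift_bound (a:ℝ) 0 hb le_rfl n hn
    have hα2 : ((α:ℝ) - 1)/2 = (a:ℝ) := by subst ha; push_cast; ring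
    have key : Real.log (Real.Gamma ((m:ℝ) + 1/2)) - (((n:ℝ) + ((α:ℝ)-1)/2) * Real.log n - n)
        = (Real.log (Real.Gamma ((m:ℝ) + 1/2)) - ((m:ℝ) * Real.log m - m))
          + (((n:ℝ) + (a:ℝ) + 0) * (Real.log ((n:ℝ) + (a:ℝ)) - Real.log n) - a) := by
      rw [hα2, hmc]; ring
    rw [key]
    exact (abs_add_le _ _).trans (add_le_add he hshift)

/-- For the Bayes measure with Dirichlet(1/2,…,1/2) prior over an alphabet
of size `α`, `-log Qⁿ = ∑_x c(x) log(n/c(x)) + ((α-1)/2) log n + O(1)`, uniformly over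
all counts `c` with `∑_x c(x) = n`. (Terms with `c(x) = 0` vanish since in Lean
`n/0 = 0` and `log 0 = 0`.) -/
theorem neg_log_bayes_measure_asymptotics (α : ℕ) (hα : 2 ≤ α) :
    ∃ C : ℝ, ∀ n : ℕ, 1 ≤ n → ∀ c : Fin α → ℕ, ∑ x, c x = n →
      |(-Real.log (Real.Gamma (α / 2) / Real.Gamma (n + α / 2) *
            ∏ x, Real.Gamma (c x + 1/2) / Real.Gamma (1/2)))
        - ((∑ x, (c x : ℝ) * Real.log ((n : ℝ) / (c x : ℝ)))
            + ((α : ℝ) - 1) / 2 * Real.log n)| ≤ C := by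
  obtain ⟨K₂, hK₂⟩ := half_stirling_bound
  obtain ⟨KB, hKB⟩ := gamma_shift_bound α hα
  have hG2 : (0:ℝ) < Real.Gamma (1/2) := Real.Gamma_pos_of_pos (by norm_num)
  have hGα : (0:ℝ) < Real.Gamma ((α:ℝ)/2) := by
    apply Real.Gamma_pos_of_pos; positivity
  refine ⟨KB + (α:ℝ) * K₂ + |Real.log (Real.Gamma ((α:ℝ)/2))|
    + (α:ℝ) * |Real.log (Real.Gamma (1/2))|, ?_⟩
  intro n hn c hc
  have hnR : (0:ℝ) < n := by exact_mod_cast hn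
  have hGn : (0:ℝ) < Real.Gamma ((n:ℝ) + (α:ℝ)/2) := by
    apply Real.Gamma_pos_of_pos; positivity
  have hGc : ∀ x : Fin α, (0:ℝ) < Real.Gamma ((c x : ℝ) + 1/2) := fun x => by
    apply Real.Gamma_pos_of_pos; positivity
  -- step 1 : log of the product
  have hprodpos : ∀ x : Fin α, (0:ℝ) < Real.Gamma ((c x:ℝ) + 1/2) / Real.Gamma (1/2) :=
    fun x => div_pos (hGc x) hG2
  have hlogQ : Real.log (Real.Gamma ((α:ℝ) / 2) / Real.Gamma ((n:ℝ) + (α:ℝ) / 2) *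
          ∏ x, Real.Gamma ((c x:ℝ) + 1/2) / Real.Gamma (1/2))
      = Real.log (Real.Gamma ((α:ℝ)/2)) - Real.log (Real.Gamma ((n:ℝ) + (α:ℝ)/2))
        + ∑ x, (Real.log (Real.Gamma ((c x:ℝ) + 1/2)) - Real.log (Real.Gamma (1/2))) := by
    rw [Real.log_mul (by positivity) (by positivity),
      Real.log_div (ne_of_gt hGα) (ne_of_gt hGn),
      Real.log_prod (fun x _ => ne_of_gt (hprodpos x))]
    congr 1
    exact Finset.sum_congr rfl fun x _ =>
      Real.log_div (ne_of_gt (hGc x)) (ne_of_gt hG2)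
  -- step 2 : rewrite the target sum
  have hcast : ∑ x, (c x : ℝ) = (n : ℝ) := by
    rw [← Nat.cast_sum, hc]
  have hsum : ∑ x, (c x : ℝ) * Real.log ((n:ℝ) / (c x : ℝ))
      = (n:ℝ) * Real.log n - ∑ x, (c x : ℝ) * Real.log (c x) := by
    have per : ∀ x : Fin α, (c x : ℝ) * Real.log ((n:ℝ) / (c x : ℝ))
        = (c x : ℝ) * Real.log n - (c x : ℝ) * Real.log (c x) := by
      intro x
      rcases Nat.eq_zero_or_pos (c x) with h0 | hpos
      · simp [h0]
      · have : (0:ℝ) < (c x : ℝ) := by exact_mod_cast hpos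
        rw [Real.log_div (ne_of_gt hnR) (ne_of_gt this)]
        ring
    rw [Finset.sum_congr rfl fun x _ => per x, Finset.sum_sub_distrib,
      ← Finset.sum_mul, hcast]
  -- step 3 : key algebraic identity
  have key : (-Real.log (Real.Gamma ((α:ℝ) / 2) / Real.Gamma ((n:ℝ) + (α:ℝ) / 2) *
            ∏ x, Real.Gamma ((c x:ℝ) + 1/2) / Real.Gamma (1/2)))
        - ((∑ x, (c x : ℝ) * Real.log ((n : ℝ) / (c x : ℝ)))
            + ((α : ℝ) - 1) / 2 * Real.log n)
      = (Real.log (Real.Gamma ((n:ℝ) + (α:ℝ)/2))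
            - (((n:ℝ) + ((α:ℝ)-1)/2) * Real.log n - n))
        - (∑ x, (Real.log (Real.Gamma ((c x:ℝ) + 1/2))
            - ((c x : ℝ) * Real.log (c x) - (c x : ℝ))))
        - Real.log (Real.Gamma ((α:ℝ)/2)) + (α:ℝ) * Real.log (Real.Gamma (1/2)) := by
    rw [hlogQ, hsum, Finset.sum_sub_distrib, Finset.sum_sub_distrib, Finset.sum_sub_distrib,
      hcast, Finset.sum_const, Finset.card_univ, Fintype.card_fin, nsmul_eq_mul]
    ring
  rw [key]
  -- step 4 : bounds
  have hA := hKB n hn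
  have hBsum : |∑ x, (Real.log (Real.Gamma ((c x:ℝ) + 1/2))
      - ((c x : ℝ) * Real.log (c x) - (c x : ℝ)))| ≤ (α:ℝ) * K₂ := by
    refine (Finset.abs_sum_le_sum_abs _ _).trans ?_
    have : ∀ x ∈ (univ : Finset (Fin α)), |Real.log (Real.Gamma ((c x:ℝ) + 1/2))
        - ((c x : ℝ) * Real.log (c x) - (c x : ℝ))| ≤ K₂ := fun x _ => hK₂ (c x)
    calc ∑ x, |Real.log (Real.Gamma ((c x:ℝ) + 1/2))
          - ((c x : ℝ) * Real.log (c x) - (c x : ℝ))|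
        ≤ ∑ _x : Fin α, K₂ := Finset.sum_le_sum this
      _ = (α:ℝ) * K₂ := by
          rw [Finset.sum_const, Finset.card_univ, Fintype.card_fin, nsmul_eq_mul]
  calc |_ - _ - _ + (α:ℝ) * Real.log (Real.Gamma (1/2))|
      ≤ |_ - _ - _| + |(α:ℝ) * Real.log (Real.Gamma (1/2))| := abs_add_le _ _
    _ ≤ (|_ - _| + |Real.log (Real.Gamma ((α:ℝ)/2))|)
        + |(α:ℝ) * Real.log (Real.Gamma (1/2))| := by
          gcongr; exact abs_sub _ _
    _ ≤ ((|Real.log (Real.Gamma ((n:ℝ) + (α:ℝ)/2))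
            - (((n:ℝ) + ((α:ℝ)-1)/2) * Real.log n - n)|
          + |∑ x, (Real.log (Real.Gamma ((c x:ℝ) + 1/2))
            - ((c x : ℝ) * Real.log (c x) - (c x : ℝ)))|)
          + |Real.log (Real.Gamma ((α:ℝ)/2))|)
        + |(α:ℝ) * Real.log (Real.Gamma (1/2))| := by
          gcongr; exact abs_sub _ _
    _ ≤ ((KB + (α:ℝ) * K₂) + |Real.log (Real.Gamma ((α:ℝ)/2))|)
        + (α:ℝ) * |Real.log (Real.Gamma (1/2))| := by
          gcongr
          rw [abs_mul, Nat.abs_cast]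
    _ = _ := by ring
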